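/- Let f_0(x,y,z) = z^3 - x*y*z^2 + (x^2+y^2-2)*z - x*y. For q = 2^n, the number of triples (a,b,c) in F_q^3 with f_0(a,b,c) = 0 equals q^2 + 1. -/

import Mathlib

open Finset

theorem stmt_3 (n : ℕ) (hn : 0 < n)
    (F : Type) [Field F] [Fintype F] (hF : Fintype.card F = 2 ^ n) :
    Nat.card {v : F × F × F //
      v.2.2 ^ 3 - v.1 * v.2.1 * v.2.2 ^ 2 + (v.1 ^ 2 + v.2.1 ^ 2 - 2) * v.2.2
        - v.1 * v.2.1 = 0} = (2 ^ n) ^ 2 + 1 := by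
  classical
  -- characteristic 2
  have h2 : (2 : F) = 0 := by
    have h := FiniteField.cast_card_eq_zero F
    rw [hF] at h
    push_cast at h
    exact pow_eq_zero_iff (by omega) |>.mp h
  have key : ∀ a b c : F,
      (c ^ 3 - a*b*c^2 + (a^2+b^2-2)*c - a*b = 0) ↔ ((a*c+b)*(b*c+a) = c^3) := by
    intro a b c
    constructor <;> intro h
    · linear_combination -h + (c*(a^2+b^2-1))*h2
    · linear_combination -h + (c*(a^2+b^2-1))*h2
  have main : ∀ c : F,
      (univ.filter fun p : F × F => (p.1*c+p.2)*(p.2*c+p.1) = c^3).card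
        = (2^n - 1) + (if c = 0 then 2^n else 0) + (if c = 1 then 1 else 0) := by
    intro c
    by_cases hc0 : c = 0
    · subst hc0
      have i0 : (if (0:F) = 0 then 2^n else 0) = 2^n := if_pos rfl
      have i1 : (if (0:F) = 1 then 1 else 0) = 0 := if_neg zero_ne_one
      rw [i0, i1, add_zero]
      have hcompl : (univ.filter fun p : F × F =>
          ¬ ((p.1*0+p.2)*(p.2*0+p.1) = 0^3)).card = (2^n - 1) * (2^n - 1) := by
        have hset : (univ.filter fun p : F × F => ¬ ((p.1*0+p.2)*(p.2*0+p.1) = 0^3))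
            = (univ.filter fun x : F => x ≠ 0) ×ˢ (univ.filter fun x : F => x ≠ 0) := by
          ext p
          simp [mem_filter, mem_product, mul_eq_zero]
          tauto
        rw [hset, card_product]
        have : (univ.filter fun x : F => x ≠ 0).card = 2^n - 1 := by
          rw [filter_ne', card_erase_of_mem (mem_univ 0), card_univ, hF]
        rw [this]
      have hsum := card_filter_add_card_filter_not
        (s := (univ : Finset (F × F)))
        (p := fun p : F × F => (p.1*0+p.2)*(p.2*0+p.1) = 0^3)
      rw [hcompl, card_univ, Fintype.card_prod, hF] at hsum
      have hq1 : 1 ≤ 2^n := Nat.one_le_two_pow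
      obtain ⟨k, hk⟩ : ∃ k, 2^n = k + 1 := ⟨2^n - 1, by omega⟩
      rw [hk] at hsum ⊢
      simp only [Nat.add_sub_cancel] at hsum ⊢
      have e : (k+1)*(k+1) = k*k + 2*k + 1 := by ring
      linarith
    · by_cases hc1 : c = 1
      · subst hc1
        have i0 : (if (1:F) = 0 then 2^n else 0) = 0 := if_neg one_ne_zero
        have i1 : (if (1:F) = 1 then 1 else 0) = 1 := if_pos rfl
        rw [i0, i1, add_zero]
        have hcard : (univ.filter fun p : F × F => (p.1*1+p.2)*(p.2*1+p.1) = 1^3).card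
            = Fintype.card F := by
          rw [← card_univ]
          refine card_bij' (fun p _ => p.1) (fun a _ => (a, 1+a)) ?_ ?_ ?_ ?_
          · intro p _
            exact mem_univ _
          · intro a _
            simp only [mem_filter, mem_univ, true_and]
            linear_combination (2*a^2+2*a)*h2
          · intro p hp
            simp only [mem_filter, mem_univ, true_and] at hp
            have hs : (p.1 + p.2 - 1)^2 = 0 := by
              linear_combination hp + (1 - p.1 - p.2)*h2
            have hs0 : p.1 + p.2 - 1 = 0 :=
              pow_eq_zero_iff (two_ne_zero) |>.mp hs
            have hb : p.2 = 1 + p.1 := by linear_combination hs0 - p.1*h2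
            exact Prod.ext rfl hb.symm
          · intro a _
            rfl
        rw [hcard, hF]
        have hq1 : 1 ≤ 2^n := Nat.one_le_two_pow
        omega
      · have i0 : (if c = 0 then 2^n else 0) = 0 := if_neg hc0
        have i1 : (if c = 1 then 1 else 0) = 0 := if_neg hc1
        rw [i0, i1, add_zero, add_zero]
        have hcc : c + 1 ≠ 0 := by
          intro h
          exact hc1 (by linear_combination h - h2)
        have hw1 : (c+1)^2 * ((c+1)^2)⁻¹ = 1 :=
          mul_inv_cancel₀ (pow_ne_zero _ hcc)
        set w : F := ((c+1)^2)⁻¹ with hw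
        have hcard : (univ.filter fun p : F × F => (p.1*c+p.2)*(p.2*c+p.1) = c^3).card
            = ((univ : Finset F).erase 0).card := by
          refine card_bij' (fun p _ => p.1*c+p.2)
            (fun u _ => ((u*c + c^3*u⁻¹)*w, (u + c^3*u⁻¹*c)*w)) ?_ ?_ ?_ ?_
          · intro p hp
            simp only [mem_filter, mem_univ, true_and] at hp
            have hu0 : p.1*c+p.2 ≠ 0 := by
              intro h
              apply hc0
              have : c^3 = 0 := by rw [← hp, h, zero_mul]
              exact pow_eq_zero_iff (by norm_num) |>.mp this
            exact mem_erase.mpr ⟨hu0, mem_univ _⟩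
          · intro u hu
            have hu0 : u ≠ 0 := (mem_erase.mp hu).1
            simp only [mem_filter, mem_univ, true_and]
            have e1 : ((u*c + c^3*u⁻¹)*w)*c + (u + c^3*u⁻¹*c)*w = u := by
              linear_combination u*hw1 + (w*c*(c^3*u⁻¹-u))*h2
            have e2 : ((u + c^3*u⁻¹*c)*w)*c + ((u*c + c^3*u⁻¹)*w) = c^3*u⁻¹ := by
              linear_combination (c^3*u⁻¹)*hw1 + (w*c*(u-c^3*u⁻¹))*h2
            rw [e1, e2]
            field_simp
          · intro p hp
            simp only [mem_filter, mem_univ, true_and] at hp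
            have hu0 : p.1*c+p.2 ≠ 0 := by
              intro h
              apply hc0
              have : c^3 = 0 := by rw [← hp, h, zero_mul]
              exact pow_eq_zero_iff (by norm_num) |>.mp this
            have hv : c^3 * (p.1*c+p.2)⁻¹ = p.2*c+p.1 := by
              rw [eq_comm, eq_mul_inv_iff_mul_eq₀ hu0]
              linear_combination hp
            show (((p.1*c+p.2)*c + c^3*(p.1*c+p.2)⁻¹)*w,
              ((p.1*c+p.2) + c^3*(p.1*c+p.2)⁻¹*c)*w) = p
            rw [hv]
            have e1 : ((p.1*c+p.2)*c + (p.2*c+p.1))*w = p.1 := by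
              linear_combination p.1*hw1 + (w*c*(p.2-p.1))*h2
            have e2 : ((p.1*c+p.2) + (p.2*c+p.1)*c)*w = p.2 := by
              linear_combination p.2*hw1 + (w*c*(p.1-p.2))*h2
            exact Prod.ext e1 e2
          · intro u hu
            have hu0 : u ≠ 0 := (mem_erase.mp hu).1
            show ((u*c + c^3*u⁻¹)*w)*c + (u + c^3*u⁻¹*c)*w = u
            linear_combination u*hw1 + (w*c*(c^3*u⁻¹-u))*h2
        rw [hcard, card_erase_of_mem (mem_univ 0), card_univ, hF]
  -- now assemble
  rw [Nat.card_eq_fintype_card, Fintype.card_subtype]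
  have step1 : (univ.filter fun v : F × F × F =>
      v.2.2 ^ 3 - v.1 * v.2.1 * v.2.2 ^ 2 + (v.1 ^ 2 + v.2.1 ^ 2 - 2) * v.2.2
        - v.1 * v.2.1 = 0).card
      = ∑ c : F, (univ.filter fun p : F × F => (p.1*c+p.2)*(p.2*c+p.1) = c^3).card := by
    rw [card_eq_sum_card_fiberwise (f := fun v : F × F × F => v.2.2) (t := univ)
      (fun x _ => mem_univ _)]
    apply Finset.sum_congr rfl
    intro c _
    refine card_bij' (fun v _ => (v.1, v.2.1)) (fun p _ => (p.1, p.2, c)) ?_ ?_ ?_ ?_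
    · intro v hv
      simp only [mem_filter, mem_univ, true_and] at hv
      obtain ⟨h1, h3⟩ := hv
      subst h3
      simp only [mem_filter, mem_univ, true_and]
      exact (key v.1 v.2.1 v.2.2).mp h1
    · intro p hp
      simp only [mem_filter, mem_univ, true_and, and_true] at hp ⊢
      exact (key p.1 p.2 c).mpr hp
    · intro v hv
      simp only [mem_filter, mem_univ, true_and] at hv
      exact Prod.ext rfl (Prod.ext rfl hv.2.symm)
    · intro p _
      rfl
  rw [step1]
  rw [Finset.sum_congr rfl (fun c _ => main c)]
  rw [Finset.sum_add_distrib, Finset.sum_add_distrib, Finset.sum_const,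
    Finset.sum_ite_eq' univ (0 : F), Finset.sum_ite_eq' univ (1 : F),
    if_pos (mem_univ _), if_pos (mem_univ _), card_univ, hF, smul_eq_mul]
  have hq1 : 1 ≤ 2^n := Nat.one_le_two_pow
  obtain ⟨k, hk⟩ : ∃ k, 2^n = k + 1 := ⟨2^n - 1, by omega⟩
  rw [hk]
  simp only [Nat.add_sub_cancel]
  ring
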